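/- Let G be a finite group and H a subgroup whose index q has largest prime divisor p_k and smallest prime divisor p₁. Then ψ'_H(G) < (p_k + 1)/p₁. In particular, if q is a prime power p^α, then ψ'_H(G) < (p+1)/p ≤ 3/2. -/

import Mathlib

open Finset

/-- The order of `x` relative to the subgroup `H`: the least positive `m` with `x ^ m ∈ H`. -/
noncomputable def relOrder {G : Type*} [Group G] (H : Subgroup G) (x : G) : ℕ :=
  sInf {m : ℕ | 0 < m ∧ x ^ m ∈ H}

/-- `ψ_H(G)`, the sum of element orders of `G` relative to the subgroup `H`. -/
noncomputable def psiRel (G : Type*) [Group G] [Fintype G] (H : Subgroup G) : ℕ :=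
  ∑ x : G, relOrder H x

/-- `ψ(G)`, the sum of element orders of `G`. -/
noncomputable def psi (G : Type*) [Group G] [Fintype G] : ℕ :=
  ∑ x : G, orderOf x

section RelOrder

variable {G : Type*} [Group G]

lemma relOrder_mem [Finite G] (H : Subgroup G) (x : G) :
    0 < relOrder H x ∧ x ^ relOrder H x ∈ H := by
  have h : orderOf x ∈ {m : ℕ | 0 < m ∧ x ^ m ∈ H} :=
    ⟨orderOf_pos x, by simp [pow_orderOf_eq_one, H.one_mem]⟩
  exact Nat.sInf_mem ⟨orderOf x, h⟩

lemma relOrder_le (H : Subgroup G) {x : G} {m : ℕ} (hm : 0 < m) (h : x ^ m ∈ H) :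
    relOrder H x ≤ m :=
  Nat.sInf_le ⟨hm, h⟩

lemma relOrder_one [Finite G] (H : Subgroup G) : relOrder H (1 : G) = 1 :=
  le_antisymm (relOrder_le H one_pos (by simp [H.one_mem])) (relOrder_mem H 1).1

lemma relOrder_le_index [Fintype G] (H : Subgroup G) (x : G) :
    relOrder H x ≤ H.index := by
  classical
  have hfin : Fintype (G ⧸ H) := Fintype.ofFinite _
  have hcard : Fintype.card (G ⧸ H) = H.index := by
    rw [← Nat.card_eq_fintype_card]; rfl
  obtain ⟨i, j, hne, hij⟩ :=
    Fintype.exists_ne_map_eq_of_card_lt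
      (fun i : Fin (H.index + 1) => (QuotientGroup.mk (x ^ (i : ℕ)) : G ⧸ H))
      (by simp [hcard])
  wlog hlt : (i : ℕ) < (j : ℕ) generalizing i j
  · exact this j i hne.symm hij.symm
      (by rcases (Fin.val_ne_of_ne hne).lt_or_gt with h | h <;> omega)
  have hmem : x ^ ((j : ℕ) - (i : ℕ)) ∈ H := by
    have h1 := (QuotientGroup.eq (s := H)).mp hij
    have hx : (x ^ (i : ℕ))⁻¹ * x ^ (j : ℕ) = x ^ ((j : ℕ) - (i : ℕ)) := by
      have : x ^ (j : ℕ) = x ^ (i : ℕ) * x ^ ((j : ℕ) - (i : ℕ)) := by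
        rw [← pow_add]; congr 1; omega
      rw [this, inv_mul_cancel_left]
    rwa [hx] at h1
  exact (relOrder_le H (by omega) hmem).trans (by have := j.2; omega)

end RelOrder

section Quot

variable {G : Type*} [Group G]

lemma relOrder_eq_orderOf_mk [Finite G] (K : Subgroup G) [K.Normal] (x : G) :
    relOrder K x = orderOf (QuotientGroup.mk x : G ⧸ K) := by
  have hset : {m : ℕ | 0 < m ∧ x ^ m ∈ K} =
      {m : ℕ | 0 < m ∧ (QuotientGroup.mk x : G ⧸ K) ^ m = 1} := by
    ext m
    simp [← QuotientGroup.mk_pow, QuotientGroup.eq_one_iff]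
  have hne : orderOf (QuotientGroup.mk x : G ⧸ K) ∈
      {m : ℕ | 0 < m ∧ (QuotientGroup.mk x : G ⧸ K) ^ m = 1} :=
    ⟨orderOf_pos _, pow_orderOf_eq_one _⟩
  rw [relOrder, hset]
  apply le_antisymm (Nat.sInf_le hne)
  obtain ⟨h1, h2⟩ := Nat.sInf_mem (⟨_, hne⟩ : Set.Nonempty _)
  exact Nat.le_of_dvd h1 (orderOf_dvd_of_pow_eq_one h2)

/-- fibers of the quotient map are in bijection with the subgroup -/
noncomputable def mkFiberEquiv (K : Subgroup G) (z : G) :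
    K ≃ {w : G // (QuotientGroup.mk w : G ⧸ K) = QuotientGroup.mk z} where
  toFun k := ⟨z * k, by
    rw [eq_comm, QuotientGroup.eq]
    simpa using k.2⟩
  invFun w := ⟨z⁻¹ * w.1, by
    have := (QuotientGroup.eq (s := K)).mp w.2.symm
    simpa using this⟩
  left_inv k := by ext; simp
  right_inv w := by ext; simp

lemma sum_comp_mk [Fintype G] (K : Subgroup G) [Fintype (G ⧸ K)] (f : G ⧸ K → ℕ) :
    ∑ x : G, f (QuotientGroup.mk x) = Nat.card K * ∑ y : G ⧸ K, f y := by
  classical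
  rw [← Finset.sum_fiberwise' Finset.univ (fun x : G => (QuotientGroup.mk x : G ⧸ K)) f,
    Finset.mul_sum]
  refine Finset.sum_congr rfl fun y _ => ?_
  rw [Finset.sum_const, smul_eq_mul]
  congr 1
  induction y using QuotientGroup.induction_on with
  | _ z =>
    have h1 : ({x : G | (QuotientGroup.mk x : G ⧸ K) = QuotientGroup.mk z} : Finset G).card
        = Fintype.card {w : G // (QuotientGroup.mk w : G ⧸ K) = QuotientGroup.mk z} := by
      rw [Fintype.card_subtype]
    rw [h1, ← Nat.card_eq_fintype_card, ← Nat.card_congr (mkFiberEquiv K z)]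

end Quot

lemma psi_cyclic (C : Type*) [Group C] [Fintype C] [IsCyclic C] :
    psi C = ∑ d ∈ (Fintype.card C).divisors, d.totient * d := by
  classical
  rw [psi, ← Finset.sum_fiberwise_of_maps_to (g := orderOf)
      (t := (Fintype.card C).divisors) (fun x _ => Nat.mem_divisors.mpr
        ⟨orderOf_dvd_card, Fintype.card_ne_zero⟩) (fun x => orderOf x)]
  refine Finset.sum_congr rfl fun d hd => ?_
  have hdvd : d ∣ Fintype.card C := (Nat.mem_divisors.mp hd).1
  calc (∑ x ∈ Finset.univ with orderOf x = d, orderOf x)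
      = ∑ x ∈ Finset.univ with orderOf x = d, d :=
        Finset.sum_congr rfl fun x hx => (Finset.mem_filter.mp hx).2
    _ = (∑ x ∈ Finset.univ with orderOf x = d, (1:ℕ)) * d := by
        rw [Finset.sum_const, Finset.sum_const]; ring
    _ = d.totient * d := by
        rw [Finset.sum_const, smul_eq_mul, mul_one, IsCyclic.card_orderOf_eq_totient hdvd]

open ArithmeticFunction in
lemma F_mult {x y : ℕ} (h : Nat.Coprime x y) :
    (∑ d ∈ (x * y).divisors, d.totient * d) =
      (∑ d ∈ x.divisors, d.totient * d) * ∑ d ∈ y.divisors, d.totient * d := by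
  have hg : IsMultiplicative (⟨fun d => d.totient * d, by simp⟩ : ArithmeticFunction ℕ) := by
    constructor
    · simp
    · intro m n hmn
      simp only [coe_mk]
      rw [Nat.totient_mul hmn]; ring
  have := (isMultiplicative_zeta.mul hg).map_mul_of_coprime h
  erw [zeta_mul_apply, zeta_mul_apply, zeta_mul_apply] at this
  simpa only [coe_mk] using this

lemma F_pp (p a : ℕ) (hp : p.Prime) :
    ((p : ℚ) + 1) * ∑ d ∈ (p ^ a).divisors, (d.totient * d : ℕ) = (p:ℚ) ^ (2*a+1) + 1 := by
  induction a with
  | zero => simp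
  | succ a ih =>
    rw [Nat.sum_divisors_prime_pow hp] at ih ⊢
    rw [Finset.sum_range_succ]
    have hphi : (((p ^ (a+1)).totient : ℕ) : ℚ) = (p:ℚ)^a * ((p:ℚ) - 1) := by
      rw [Nat.totient_prime_pow hp (Nat.succ_pos a)]
      push_cast [Nat.cast_sub hp.one_le]
      ring
    push_cast at ih ⊢
    rw [mul_add, ih, hphi]
    ring


lemma F_term (p k : ℕ) (hp : p.Prime) :
    (p:ℚ)^(2*k) * ((p:ℚ)/((p:ℚ)+1)) ≤ ((∑ d ∈ (p^k).divisors, d.totient * d : ℕ) : ℚ) := by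
  have hp1 : (0:ℚ) < (p:ℚ) + 1 := by positivity
  rw [mul_div_assoc', div_le_iff₀ hp1, mul_comm _ ((p:ℚ)+1), F_pp p k hp, pow_succ]
  linarith

lemma F_lower {q : ℕ} (hq : 0 < q) :
    (q:ℚ)^2 * ∏ p ∈ q.primeFactors, (p:ℚ)/((p:ℚ)+1) ≤
      ((∑ d ∈ q.divisors, d.totient * d : ℕ) : ℚ) := by
  have hmf := Nat.multiplicative_factorization (fun m => ∑ d ∈ m.divisors, d.totient * d)
      (fun x y h => F_mult h) (by simp) hq.ne'
  have hqq : (q:ℚ) = ∏ p ∈ q.primeFactors, (p:ℚ) ^ q.factorization p := by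
    conv_lhs => rw [← Nat.factorization_prod_pow_eq_self hq.ne']
    rw [Finsupp.prod, Nat.support_factorization]
    push_cast
    rfl
  rw [hmf, Finsupp.prod, Nat.support_factorization, Nat.cast_prod, hqq, ← Finset.prod_pow,
    ← Finset.prod_mul_distrib]
  refine Finset.prod_le_prod (fun p hpp => by positivity) (fun p hpp => ?_)
  have hp := Nat.prime_of_mem_primeFactors hpp
  have h := F_term p (q.factorization p) hp
  rw [← pow_mul, mul_comm (q.factorization p) 2]
  exact h

lemma prod_div_ge (S : Finset ℕ) (hS : S.Nonempty) :
    ((S.min' hS : ℚ)) / ((S.max' hS : ℚ) + 1) ≤ ∏ p ∈ S, (p:ℚ)/((p:ℚ)+1) := by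
  classical
  revert hS
  induction S using Finset.strongInduction with
  | _ S ih =>
    intro hS
    by_cases hcard : S.card ≤ 1
    · obtain ⟨a, rfl⟩ := Finset.card_eq_one.mp (le_antisymm hcard hS.card_pos)
      simp
    · have h1 : 1 < S.card := by omega
      have hMS : S.max' hS ∈ S := S.max'_mem hS
      set M := S.max' hS with hM
      set S' := S.erase M with hSd
      have hsub : S' ⊂ S := Finset.erase_ssubset hMS
      have hminltmax : S.min' hS < M := Finset.min'_lt_max'_of_card S h1
      have hminmem : S.min' hS ∈ S' :=
        Finset.mem_erase.mpr ⟨hminltmax.ne, S.min'_mem hS⟩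
      have hS'ne : S'.Nonempty := ⟨_, hminmem⟩
      have ihS' := ih S' hsub hS'ne
      have hmin : S'.min' hS'ne = S.min' hS :=
        le_antisymm (Finset.min'_le _ _ hminmem)
          (S.min'_le _ (Finset.mem_of_mem_erase (S'.min'_mem hS'ne)))
      have hmaxlt : S'.max' hS'ne < M :=
        lt_of_le_of_ne (S.le_max' _ (Finset.mem_of_mem_erase (S'.max'_mem hS'ne)))
          (Finset.ne_of_mem_erase (S'.max'_mem hS'ne))
      have hM1 : (1:ℕ) ≤ M := by omega
      have hMpos : (0:ℚ) < (M:ℚ) := by exact_mod_cast hM1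
      have hstep : ((S'.max' hS'ne : ℚ) + 1) ≤ (M:ℚ) := by exact_mod_cast hmaxlt
      have hmnn : (0:ℚ) ≤ (S.min' hS : ℚ) := by positivity
      have hprod : (∏ p ∈ S', (p:ℚ)/((p:ℚ)+1)) * ((M:ℚ)/((M:ℚ)+1)) =
          ∏ p ∈ S, (p:ℚ)/((p:ℚ)+1) := Finset.prod_erase_mul S _ hMS
      calc ((S.min' hS : ℚ)) / ((M : ℚ) + 1)
          = ((S.min' hS : ℚ) / (M:ℚ)) * ((M:ℚ)/((M:ℚ)+1)) := by
            field_simp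
        _ ≤ ((S.min' hS : ℚ) / ((S'.max' hS'ne : ℚ) + 1)) * ((M:ℚ)/((M:ℚ)+1)) := by
            refine mul_le_mul_of_nonneg_right ?_ (by positivity)
            exact div_le_div_of_nonneg_left hmnn (by positivity) hstep
        _ ≤ (∏ p ∈ S', (p:ℚ)/((p:ℚ)+1)) * ((M:ℚ)/((M:ℚ)+1)) := by
            refine mul_le_mul_of_nonneg_right ?_ (by positivity)
            rw [← hmin]; exact ihS'
        _ = ∏ p ∈ S, (p:ℚ)/((p:ℚ)+1) := hprod

theorem psiRel_ratio_lt {G : Type*} [Group G] [Fintype G] (H : Subgroup G)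
    (hq : 1 < H.index)
    (p₁ pk : ℕ) (hp₁ : p₁ = H.index.minFac)
    (hpk : pk.Prime) (hpkdvd : pk ∣ H.index)
    (hpkmax : ∀ p : ℕ, p.Prime → p ∣ H.index → p ≤ pk)
    (n : ℕ) [NeZero n] (hn : n = Fintype.card G)
    (K : Subgroup (Multiplicative (ZMod n))) (hK : Nat.card K = Nat.card H) :
    (psiRel G H : ℚ) / (psiRel (Multiplicative (ZMod n)) K : ℚ) < ((pk : ℚ) + 1) / p₁ ∧
      (∀ p α : ℕ, p.Prime → 0 < α → H.index = p ^ α →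
        (psiRel G H : ℚ) / (psiRel (Multiplicative (ZMod n)) K : ℚ) < ((p : ℚ) + 1) / p ∧
          ((p : ℚ) + 1) / p ≤ 3 / 2) := by
  classical
  set q := H.index with hqdef
  have hq0 : 0 < q := lt_trans one_pos hq
  -- numerator bound
  have hA : psiRel G H < Fintype.card G * q := by
    have h := Finset.sum_lt_sum (s := Finset.univ) (f := fun x : G => relOrder H x)
      (g := fun _ : G => q) (fun i _ => relOrder_le_index H i)
      ⟨1, Finset.mem_univ 1, by simpa [relOrder_one H] using hq⟩
    rw [psiRel]
    simpa [Finset.sum_const, smul_eq_mul, Finset.card_univ] using h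
  -- denominator
  letI : Fintype (Multiplicative (ZMod n) ⧸ K) := Fintype.ofFinite _
  haveI : IsCyclic (Multiplicative (ZMod n) ⧸ K) :=
    isCyclic_of_surjective (QuotientGroup.mk' K) (QuotientGroup.mk'_surjective K)
  have hcardH : 0 < Nat.card H := Nat.card_pos
  have hnG : Nat.card H * q = Nat.card G := Subgroup.card_mul_index H
  have hcardn : Nat.card (Multiplicative (ZMod n)) = n := by
    simp [Nat.card_eq_fintype_card, ZMod.card]
  have hKidx : K.index = q := by
    have h1 : Nat.card K * K.index = n := by
      rw [Subgroup.card_mul_index, hcardn]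
    rw [hK] at h1
    have h2 : Nat.card H * q = n := by rw [hnG, hn, Nat.card_eq_fintype_card]
    exact Nat.eq_of_mul_eq_mul_left hcardH (h1.trans h2.symm)
  have hcardQ : Fintype.card (Multiplicative (ZMod n) ⧸ K) = q := by
    rw [← Nat.card_eq_fintype_card]
    exact hKidx
  have hDeq : psiRel (Multiplicative (ZMod n)) K =
      Nat.card H * ∑ d ∈ q.divisors, d.totient * d := by
    have h1 : psiRel (Multiplicative (ZMod n)) K =
        ∑ x : Multiplicative (ZMod n), orderOf (QuotientGroup.mk x :
          Multiplicative (ZMod n) ⧸ K) := by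
      rw [psiRel]
      exact Finset.sum_congr rfl fun x _ => relOrder_eq_orderOf_mk K x
    rw [h1, sum_comp_mk K orderOf, hK]
    congr 1
    have := psi_cyclic (Multiplicative (ZMod n) ⧸ K)
    rw [hcardQ] at this
    exact this
  -- prime factor min/max
  have hSne : q.primeFactors.Nonempty := Nat.nonempty_primeFactors.mpr hq
  have hp₁mem : p₁ ∈ q.primeFactors := by
    rw [hp₁]
    exact Nat.mem_primeFactors.mpr ⟨Nat.minFac_prime (by omega), Nat.minFac_dvd q, hq0.ne'⟩
  have hmin : q.primeFactors.min' hSne = p₁ := by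
    refine le_antisymm (Finset.min'_le _ _ hp₁mem) ?_
    obtain ⟨hpr, hd, _⟩ := Nat.mem_primeFactors.mp (q.primeFactors.min'_mem hSne)
    rw [hp₁]
    exact Nat.minFac_le_of_dvd hpr.two_le hd
  have hmax : q.primeFactors.max' hSne = pk := by
    refine le_antisymm (Finset.max'_le _ _ _ fun y hy => ?_) ?_
    · obtain ⟨hpr, hd, _⟩ := Nat.mem_primeFactors.mp hy
      exact hpkmax y hpr hd
    · exact Finset.le_max' _ _ (Nat.mem_primeFactors.mpr ⟨hpk, hpkdvd, hq0.ne'⟩)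
  have htel : ((p₁:ℚ)) / ((pk:ℚ) + 1) ≤ ∏ p ∈ q.primeFactors, (p:ℚ)/((p:ℚ)+1) := by
    have := prod_div_ge q.primeFactors hSne
    rwa [hmin, hmax] at this
  have hFlow := F_lower hq0
  -- positivity facts
  have hp₁2 : 2 ≤ p₁ := (Nat.prime_of_mem_primeFactors hp₁mem).two_le
  have hp₁pos : (0:ℚ) < (p₁:ℚ) := by exact_mod_cast lt_of_lt_of_le two_pos hp₁2
  have hpkpos : (0:ℚ) < (pk:ℚ) + 1 := by positivity
  have hFqpos : 0 < ∑ d ∈ q.divisors, d.totient * d :=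
    Finset.sum_pos' (fun i _ => Nat.zero_le _)
      ⟨q, Nat.mem_divisors_self q hq0.ne', Nat.mul_pos (Nat.totient_pos.mpr hq0) hq0⟩
  have hDpos : (0:ℚ) < (psiRel (Multiplicative (ZMod n)) K : ℚ) := by
    have : 0 < psiRel (Multiplicative (ZMod n)) K := by
      rw [hDeq]; exact Nat.mul_pos hcardH hFqpos
    exact_mod_cast this
  -- key rational inequality
  have hkey : (q:ℚ)^2 * (p₁:ℚ) ≤ ((pk:ℚ) + 1) *
      ((∑ d ∈ q.divisors, d.totient * d : ℕ) : ℚ) := by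
    have h5 : (q:ℚ)^2 * ((p₁:ℚ)/((pk:ℚ)+1)) ≤
        ((∑ d ∈ q.divisors, d.totient * d : ℕ) : ℚ) :=
      le_trans (mul_le_mul_of_nonneg_left htel (by positivity)) hFlow
    rw [mul_div_assoc', div_le_iff₀ hpkpos] at h5
    linarith
  have hmain : (psiRel G H : ℚ) / (psiRel (Multiplicative (ZMod n)) K : ℚ) <
      ((pk : ℚ) + 1) / p₁ := by
    rw [div_lt_div_iff₀ hDpos hp₁pos]
    have hAq : (psiRel G H : ℚ) < (Fintype.card G : ℚ) * q := by exact_mod_cast hA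
    have hc : (Fintype.card G : ℚ) = (Nat.card H : ℚ) * q := by
      rw [← Nat.card_eq_fintype_card, ← hnG]; push_cast; ring
    have hDc : (psiRel (Multiplicative (ZMod n)) K : ℚ) =
        (Nat.card H : ℚ) * ((∑ d ∈ q.divisors, d.totient * d : ℕ) : ℚ) := by
      rw [hDeq]; push_cast; ring
    calc (psiRel G H : ℚ) * p₁ < ((Fintype.card G : ℚ) * q) * p₁ :=
          mul_lt_mul_of_pos_right hAq hp₁pos
      _ = (Nat.card H : ℚ) * ((q:ℚ)^2 * p₁) := by rw [hc]; ring
      _ ≤ (Nat.card H : ℚ) * (((pk:ℚ) + 1) *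
            ((∑ d ∈ q.divisors, d.totient * d : ℕ) : ℚ)) :=
          mul_le_mul_of_nonneg_left hkey (by positivity)
      _ = ((pk : ℚ) + 1) * (psiRel (Multiplicative (ZMod n)) K : ℚ) := by
          rw [hDc]; ring
  refine ⟨hmain, fun p α hp hα hidx => ?_⟩
  have hpk_eq : pk = p := by
    have hd : pk ∣ p ^ α := hidx ▸ hpkdvd
    exact (Nat.prime_dvd_prime_iff_eq hpk hp).mp (hpk.dvd_of_dvd_pow hd)
  have hp₁_eq : p₁ = p := by
    have hne1 : p ^ α ≠ 1 := by rw [← hidx]; omega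
    have hmf : (p ^ α).minFac ∣ p :=
      (Nat.minFac_prime hne1).dvd_of_dvd_pow (Nat.minFac_dvd _)
    rw [hp₁, hidx]
    exact (Nat.prime_dvd_prime_iff_eq (Nat.minFac_prime hne1) hp).mp hmf
  constructor
  · rw [hpk_eq, hp₁_eq] at hmain
    exact hmain
  · have hp2 : (2:ℚ) ≤ (p:ℚ) := by exact_mod_cast hp.two_le
    rw [div_le_div_iff₀ (by linarith) (by norm_num)]
    linarith
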